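/- Let G, N be finite groups of equal order, 𝔣 : G → Aut(N) a homomorphism and 𝔤 ∈ Z¹_𝔣(G,N) a crossed homomorphism. Then the image of the homomorphism β(σ) = ρ(𝔤(σ))·𝔣(σ) is a regular subgroup of Perm(N) if and only if 𝔤 is bijective. -/

import Mathlib

/-- The right regular representation `ρ : N → Perm N`, `ρ(η)(τ) = τ * η⁻¹`. -/
def rho (N : Type*) [Group N] : N →* Equiv.Perm N where
  toFun η := Equiv.mulRight η⁻¹
  map_one' := by ext x; simp
  map_mul' a b := by ext x; simp [mul_assoc]

/-- The image of β(σ) = ρ(𝔤(σ))·𝔣(σ) is a regular subgroup of Perm(N)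
(i.e. evaluation at 1 is a bijection from it onto N) iff 𝔤 is bijective. -/
theorem beta_image_regular_iff_bijective (G N : Type*) [Group G] [Group N]
    [Fintype G] [Fintype N] (hcard : Fintype.card G = Fintype.card N)
    (𝔣 : G →* MulAut N) (𝔤 : G → N)
    (hg : ∀ σ₁ σ₂ : G, 𝔤 (σ₁ * σ₂) = 𝔤 σ₁ * 𝔣 σ₁ (𝔤 σ₂)) :
    (Function.Bijective
        (fun π : Set.range (fun σ : G => rho N (𝔤 σ) * MulAut.toPerm N (𝔣 σ)) =>
          (π : Equiv.Perm N) 1)) ↔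
      Function.Bijective 𝔤 := by
  have key : ∀ σ : G, (rho N (𝔤 σ) * MulAut.toPerm N (𝔣 σ)) (1 : N) = (𝔤 σ)⁻¹ := by
    intro σ
    simp [rho, Equiv.Perm.mul_apply, MulAut.toPerm, map_one]
    exact map_one (𝔣 σ)
  constructor
  · rintro ⟨hinj, hsurj⟩
    have hsurjg : Function.Surjective 𝔤 := by
      intro η
      obtain ⟨⟨π, σ, rfl⟩, hval⟩ := hsurj η⁻¹
      refine ⟨σ, ?_⟩
      have h2 : (𝔤 σ)⁻¹ = η⁻¹ := (key σ).symm.trans hval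
      exact inv_injective h2
    exact (Fintype.bijective_iff_surjective_and_card 𝔤).mpr ⟨hsurjg, hcard⟩
  · rintro ⟨ginj, gsurj⟩
    constructor
    · rintro ⟨π₁, σ₁, h₁⟩ ⟨π₂, σ₂, h₂⟩ h
      simp only at h
      rw [← h₁, ← h₂, key σ₁, key σ₂] at h
      have : σ₁ = σ₂ := ginj (inv_injective h)
      subst this
      exact Subtype.ext (h₁.symm.trans h₂)
    · intro η
      obtain ⟨σ, hσ⟩ := gsurj η⁻¹
      refine ⟨⟨_, σ, rfl⟩, ?_⟩
      show ((rho N) (𝔤 σ) * (MulAut.toPerm N) (𝔣 σ)) 1 = η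
      rw [key σ, hσ, inv_inv]
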